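/- Let H ≥ 1, b = (b_1,…,b_H) ∈ ℝ^H with mean b̄ = H⁻¹ Σ_g b_g, and suppose D = Σ_{g=1}^H (b_g − b̄)² > 0. Let C₂ > 0 and define σ*_g = b̄ + √(C₂/D) (b_g − b̄) for g = 1,…,H. Then: (i) H⁻¹ Σ_g σ*_g = b̄ and Σ_g (σ*_g − b̄)² = C₂; and (ii) for every σ = (σ_1,…,σ_H) ∈ ℝ^H satisfying H⁻¹ Σ_g σ_g = b̄ and Σ_g (σ_g − b̄)² = C₂, one has Σ_{g=1}^H (b_g − σ_g)² ≥ Σ_{g=1}^H (b_g − σ*_g)². -/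

import Mathlib

open BigOperators

/-- The constrained optimization behind the constrained Bayes estimator
(equations (4.4)-(4.5)): rescaling the deviations of `b` from its mean `b̄` by
`√(C₂/D)` yields the vector with mean `b̄` and ensemble sum of squared deviations `C₂`
that is closest to `b` in squared distance among all such vectors. -/
theorem stmt_14 (H : ℕ) (hH : 1 ≤ H) (b : Fin H → ℝ) (C₂ : ℝ) (hC₂ : 0 < C₂)
    (hD : 0 < ∑ g, (b g - (∑ g', b g') / H) ^ 2) :
    (((∑ g, ((∑ g', b g') / H
          + Real.sqrt (C₂ / ∑ g', (b g' - (∑ g'', b g'') / H) ^ 2)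
            * (b g - (∑ g', b g') / H))) / H
        = (∑ g', b g') / H)
      ∧ (∑ g, (((∑ g', b g') / H
            + Real.sqrt (C₂ / ∑ g', (b g' - (∑ g'', b g'') / H) ^ 2)
              * (b g - (∑ g', b g') / H)) - (∑ g', b g') / H) ^ 2
        = C₂))
    ∧ ∀ σ : Fin H → ℝ,
        (∑ g, σ g) / H = (∑ g', b g') / H →
        (∑ g, (σ g - (∑ g', b g') / H) ^ 2) = C₂ →
        (∑ g, (b g - σ g) ^ 2)
          ≥ ∑ g, (b g - ((∑ g', b g') / H
              + Real.sqrt (C₂ / ∑ g', (b g' - (∑ g'', b g'') / H) ^ 2)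
                * (b g - (∑ g', b g') / H))) ^ 2 := by
  have hH0 : (0:ℝ) < (H:ℝ) := by exact_mod_cast Nat.lt_of_lt_of_le Nat.zero_lt_one hH
  set m : ℝ := (∑ g', b g') / H with hm
  set D : ℝ := ∑ g', (b g' - m) ^ 2 with hDdef
  have hD0 : 0 < D := hD
  set s : ℝ := Real.sqrt (C₂ / D) with hs
  have hs2 : s ^ 2 = C₂ / D := Real.sq_sqrt (le_of_lt (div_pos hC₂ hD0))
  have hs2D : s ^ 2 * D = C₂ := by rw [hs2]; field_simp
  have hspos : 0 < s := Real.sqrt_pos.mpr (div_pos hC₂ hD0)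
  have hsum0 : ∑ g, (b g - m) = 0 := by
    rw [Finset.sum_sub_distrib, Finset.sum_const, Finset.card_univ, Fintype.card_fin,
      nsmul_eq_mul, hm]
    field_simp
    ring
  constructor
  · constructor
    · rw [Finset.sum_add_distrib, ← Finset.mul_sum, hsum0, mul_zero, add_zero,
        Finset.sum_const, Finset.card_univ, Fintype.card_fin, nsmul_eq_mul]
      field_simp
    · have h1 : ∀ g : Fin H, (m + s * (b g - m) - m) ^ 2 = s ^ 2 * (b g - m) ^ 2 := by
        intro g; ring
      rw [Finset.sum_congr rfl (fun g _ => h1 g), ← Finset.mul_sum, ← hDdef, hs2D]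
  · intro σ hσ1 hσ2
    have hσsum0 : ∑ g, (σ g - m) = 0 := by
      rw [Finset.sum_sub_distrib, Finset.sum_const, Finset.card_univ, Fintype.card_fin,
        nsmul_eq_mul]
      have : (∑ g, σ g) = H * m := by
        rw [← hσ1]; field_simp
      rw [this]; ring
    set P : ℝ := ∑ g, (b g - m) * (σ g - m) with hP
    have hCS : P ^ 2 ≤ D * C₂ := by
      rw [hP, hDdef, ← hσ2]
      exact Finset.sum_mul_sq_le_sq_mul_sq _ _ _
    -- RHS equals (1-s)^2 * D
    have hRHS : (∑ g, (b g - (m + s * (b g - m))) ^ 2) = (1 - s) ^ 2 * D := by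
      have h1 : ∀ g : Fin H, (b g - (m + s * (b g - m))) ^ 2
          = (1 - s) ^ 2 * (b g - m) ^ 2 := by intro g; ring
      rw [Finset.sum_congr rfl (fun g _ => h1 g), ← Finset.mul_sum]
    -- LHS equals D + C₂ - 2P
    have hLHS : (∑ g, (b g - σ g) ^ 2) = D + C₂ - 2 * P := by
      have h1 : ∀ g : Fin H, (b g - σ g) ^ 2
          = (b g - m) ^ 2 + (σ g - m) ^ 2 - 2 * ((b g - m) * (σ g - m)) := by
        intro g; ring
      rw [Finset.sum_congr rfl (fun g _ => h1 g), Finset.sum_sub_distrib,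
        Finset.sum_add_distrib, ← hDdef, hσ2, ← Finset.mul_sum, ← hP]
    rw [hLHS, hRHS]
    have hPle : P ≤ s * D := by
      nlinarith [sq_nonneg (P - s * D), mul_pos hspos hD0]
    nlinarith [hPle, hs2D]
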